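/- arXiv:1910.05652 — 2 statements merged into one kernel-verified Lean document; each statement's English description precedes it below -/
import Mathlib

section
/- Let A ∈ ℝ^{m×n} be the incidence matrix of a simple directed graph G with girth g (G contains at least one simple cycle). Then the nullspace constant satisfies nsc(s, A) = min{1, s/g} for every integer s ≥ 1. Consequently, every s-sparse vector x̄ ∈ ℝⁿ is the unique solution of min ‖x‖₁ subject to Ax = Ax̄ if and only if s < g/2. -/
/-- The ℓ₁ norm of a vector in ℝⁿ. -/
noncomputable def l1 {n : ℕ} (x : Fin n → ℝ) : ℝ := ∑ i, |x i|

/-- The ℓ₁ norm of the restriction of a vector to an index set `S`. -/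
noncomputable def l1S {n : ℕ} (S : Finset (Fin n)) (x : Fin n → ℝ) : ℝ := ∑ i ∈ S, |x i|

/-- The support of a vector, as a finite index set. -/
noncomputable def suppF {n : ℕ} (x : Fin n → ℝ) : Finset (Fin n) :=
  Finset.univ.filter (fun i => x i ≠ 0)

/-- A directed graph on `m` vertices with `n` edges given by `E : Fin n → Fin m × Fin m`
(each edge is an ordered pair (initial vertex, terminal vertex)) is simple if it has no
self-loops and any two vertices are connected by at most one edge (in either direction). -/
def IsSimpleDigraph {m n : ℕ} (E : Fin n → Fin m × Fin m) : Prop :=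
  (∀ j, (E j).1 ≠ (E j).2) ∧
  ∀ j k, j ≠ k → E j ≠ E k ∧ E j ≠ ((E k).2, (E k).1)

/-- The incidence matrix `A ∈ ℝ^{m×n}` of a directed graph. -/
def IncMatrix {m n : ℕ} (E : Fin n → Fin m × Fin m) : Matrix (Fin m) (Fin n) ℝ :=
  Matrix.of fun i j => if (E j).1 = i then -1 else if (E j).2 = i then 1 else 0

/-- Cyclic successor on `Fin len`. -/
def cyc {len : ℕ} (i : Fin len) : Fin len := ⟨(i.1 + 1) % len, Nat.mod_lt _ i.pos⟩

/-- A simple cycle of the directed graph `E`: a cyclic sequence of at least 3 distinct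
vertices, each consecutive pair being joined by an edge (traversed in either direction). -/
structure SimpleCycleIn (m n : ℕ) (E : Fin n → Fin m × Fin m) where
  len : ℕ
  hlen : 3 ≤ len
  vert : Fin len → Fin m
  inj : Function.Injective vert
  edges : ∀ i : Fin len, ∃ j : Fin n,
    E j = (vert i, vert (cyc i)) ∨ E j = (vert (cyc i), vert i)

/-- The nullspace constant `nsc(s, Φ)`: the max over index sets `S` with `|S| ≤ s` and
over `η ∈ null(Φ) ∩ B₁ⁿ` of `‖η_S‖₁`. -/
noncomputable def nsc {m n : ℕ} (s : ℕ) (Φ : Matrix (Fin m) (Fin n) ℝ) : ℝ :=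
  sSup {r : ℝ | ∃ S : Finset (Fin n), S.card ≤ s ∧
    ∃ η : Fin n → ℝ, Φ.mulVec η = 0 ∧ l1 η ≤ 1 ∧ r = l1S S η}
private lemma mod_succ_eq {len a : ℕ} (h : a < len) :
    (a + 1) % len = if a + 1 = len then 0 else a + 1 := by
  split
  · next h' => rw [h', Nat.mod_self]
  · next h' => exact Nat.mod_eq_of_lt (by omega)

lemma cyc_ne {len : ℕ} (h : 2 ≤ len) (i : Fin len) : cyc i ≠ i := by
  intro hc
  have h1 : (i.1 + 1) % len = i.1 := congrArg Fin.val hc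
  rw [mod_succ_eq i.2] at h1
  have := i.2
  split at h1 <;> omega

lemma cyc_cyc_ne {len : ℕ} (h : 3 ≤ len) (i : Fin len) : cyc (cyc i) ≠ i := by
  intro hc
  have h1 : ((i.1 + 1) % len + 1) % len = i.1 := congrArg Fin.val hc
  have h2 := i.2
  rw [mod_succ_eq i.2] at h1
  split at h1
  · next h3 => rw [mod_succ_eq (by omega)] at h1; split at h1 <;> omega
  · next h3 => rw [mod_succ_eq (by omega)] at h1; split at h1 <;> omega

lemma cyc_injective {len : ℕ} : Function.Injective (@cyc len) := by
  intro a b hab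
  have h1 : (a.1 + 1) % len = (b.1 + 1) % len := congrArg Fin.val hab
  rw [mod_succ_eq a.2, mod_succ_eq b.2] at h1
  have := a.2; have := b.2
  apply Fin.ext
  split at h1 <;> split at h1 <;> omega

lemma cyc_bijective {len : ℕ} : Function.Bijective (@cyc len) :=
  Finite.injective_iff_bijective.mp cyc_injective

lemma sum_cyc {len : ℕ} {M : Type*} [AddCommMonoid M] (f : Fin len → M) :
    ∑ i, f (cyc i) = ∑ i, f i :=
  Function.Bijective.sum_comp cyc_bijective f
/-- A cycle together with chosen edges and orientations. -/
structure FlowCycle (m n : ℕ) (E : Fin n → Fin m × Fin m) where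
  len : ℕ
  hlen : 3 ≤ len
  vert : Fin len → Fin m
  inj : Function.Injective vert
  je : Fin len → Fin n
  sgn : Fin len → ℝ
  ori : ∀ i, (E (je i) = (vert i, vert (cyc i)) ∧ sgn i = 1) ∨
             (E (je i) = (vert (cyc i), vert i) ∧ sgn i = -1)

namespace FlowCycle

variable {m n : ℕ} {E : Fin n → Fin m × Fin m} (F : FlowCycle m n E)

lemma vert_ne (i : Fin F.len) : F.vert i ≠ F.vert (cyc i) := fun h =>
  cyc_ne (by have := F.hlen; omega) i (F.inj h.symm)

lemma sgn_eq (i : Fin F.len) : F.sgn i = 1 ∨ F.sgn i = -1 := by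
  rcases F.ori i with ⟨_, h⟩ | ⟨_, h⟩
  · exact Or.inl h
  · exact Or.inr h

lemma abs_sgn (i : Fin F.len) : |F.sgn i| = 1 := by
  rcases F.sgn_eq i with h | h <;> rw [h] <;> norm_num

def toSC : SimpleCycleIn m n E :=
  ⟨F.len, F.hlen, F.vert, F.inj, fun i => ⟨F.je i, by
    rcases F.ori i with ⟨h, _⟩ | ⟨h, _⟩
    · exact Or.inl h
    · exact Or.inr h⟩⟩

lemma je_inj : Function.Injective F.je := by
  intro i k hik
  by_contra hne
  have hE : E (F.je i) = E (F.je k) := by rw [hik]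
  rcases F.ori i with ⟨hi, _⟩ | ⟨hi, _⟩ <;> rcases F.ori k with ⟨hk, _⟩ | ⟨hk, _⟩ <;>
    rw [hi, hk, Prod.ext_iff] at hE <;> obtain ⟨h1, h2⟩ := hE
  · exact hne (F.inj h1)
  · exact cyc_cyc_ne F.hlen k (by rw [← F.inj h1]; exact F.inj h2)
  · exact cyc_cyc_ne F.hlen k (by rw [← F.inj h2]; exact F.inj h1)
  · exact hne (F.inj h2)

/-- The circulation supported on the cycle, with value `±c` on its edges. -/
noncomputable def vec (c : ℝ) : Fin n → ℝ :=
  fun j => ∑ i, if F.je i = j then F.sgn i * c else 0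

lemma vec_je (c : ℝ) (i : Fin F.len) : F.vec c (F.je i) = F.sgn i * c := by
  unfold vec
  rw [Finset.sum_eq_single i]
  · simp
  · intro k _ hk
    simp only [ite_eq_right_iff]
    intro h; exact absurd (F.je_inj h) hk
  · simp

lemma vec_of_notMem (c : ℝ) {j : Fin n} (hj : ∀ i, F.je i ≠ j) : F.vec c j = 0 := by
  unfold vec
  exact Finset.sum_eq_zero fun i _ => by simp [hj i]

lemma abs_vec_je (c : ℝ) (i : Fin F.len) : |F.vec c (F.je i)| = |c| := by
  rw [F.vec_je, abs_mul, F.abs_sgn, one_mul]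

lemma l1_vec (c : ℝ) : l1 (F.vec c) = F.len * |c| := by
  unfold l1
  rw [← Finset.sum_subset (Finset.subset_univ (Finset.univ.image F.je))]
  · rw [Finset.sum_image (fun a _ b _ h => F.je_inj h)]
    simp only [abs_vec_je]
    rw [Finset.sum_const, Finset.card_univ, Fintype.card_fin, nsmul_eq_mul]
  · intro j _ hj
    rw [F.vec_of_notMem c (fun i hi => hj (Finset.mem_image.mpr ⟨i, Finset.mem_univ i, hi⟩))]
    exact abs_zero
lemma inc_mul_sgn (v : Fin m) (i : Fin F.len) :
    IncMatrix E v (F.je i) * F.sgn i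
      = (if F.vert (cyc i) = v then (1:ℝ) else 0) - (if F.vert i = v then 1 else 0) := by
  have hne := F.vert_ne i
  rcases F.ori i with ⟨h, hs⟩ | ⟨h, hs⟩ <;> rw [hs] <;>
    simp only [IncMatrix, Matrix.of_apply, h] <;> split_ifs with h1 h2 <;>
    first
      | (exact absurd (h1.trans h2.symm) hne)
      | (exact absurd (h2.trans h1.symm) hne)
      | (exact absurd (h1.trans h2.symm).symm hne)
      | (exact absurd (h2.trans h1.symm).symm hne)
      | norm_num

lemma mulVec_vec (c : ℝ) : (IncMatrix E).mulVec (F.vec c) = 0 := by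
  funext v
  simp only [Matrix.mulVec, dotProduct, Pi.zero_apply]
  unfold FlowCycle.vec
  simp only [Finset.mul_sum, mul_ite, mul_zero]
  rw [Finset.sum_comm]
  have : ∀ i : Fin F.len,
      (∑ j, if F.je i = j then IncMatrix E v j * (F.sgn i * c) else 0)
        = ((if F.vert (cyc i) = v then (1:ℝ) else 0) - (if F.vert i = v then 1 else 0)) * c := by
    intro i
    rw [Finset.sum_ite_eq Finset.univ (F.je i) (fun j => IncMatrix E v j * (F.sgn i * c))]
    simp only [Finset.mem_univ, if_true]
    rw [show IncMatrix E v (F.je i) * (F.sgn i * c) = IncMatrix E v (F.je i) * F.sgn i * c by ring,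
      F.inc_mul_sgn v i]
  rw [Finset.sum_congr rfl fun i _ => this i, ← Finset.sum_mul]
  have h2 : (∑ i : Fin F.len, ((if F.vert (cyc i) = v then (1:ℝ) else 0)
      - (if F.vert i = v then 1 else 0))) = 0 := by
    rw [Finset.sum_sub_distrib, sum_cyc (fun i => if F.vert i = v then (1:ℝ) else 0), sub_self]
  rw [h2, zero_mul]

end FlowCycle
section Key

variable {m n : ℕ} {E : Fin n → Fin m × Fin m}

/-- The flow `η` is positive along the direction of the cycle `F`. -/
def ConformalFlow (η : Fin n → ℝ) (F : FlowCycle m n E) : Prop :=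
  ∀ i, 0 < F.sgn i * η (F.je i)

lemma ConformalFlow.abs_eq {η : Fin n → ℝ} {F : FlowCycle m n E} (h : ConformalFlow η F)
    (i : Fin F.len) : |η (F.je i)| = F.sgn i * η (F.je i) := by
  have h1 := abs_of_pos (h i)
  rw [abs_mul, F.abs_sgn, one_mul] at h1
  exact h1

lemma sgn_sq {F : FlowCycle m n E} (i : Fin F.len) : F.sgn i * F.sgn i = 1 := by
  rcases F.sgn_eq i with h | h <;> rw [h] <;> norm_num

lemma decomp (F : FlowCycle m n E) {η : Fin n → ℝ} (hconf : ConformalFlow η F)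
    (hcirc : (IncMatrix E).mulVec η = 0) :
    ∃ (c : ℝ) (η' : Fin n → ℝ), 0 < c ∧
      (IncMatrix E).mulVec η' = 0 ∧
      l1 η = l1 η' + F.len * c ∧
      (∀ j, |η j| ≤ |η' j| + c) ∧
      (suppF η').card < (suppF η).card := by
  have hne : (Finset.univ : Finset (Fin F.len)).Nonempty :=
    ⟨⟨0, by have := F.hlen; omega⟩, Finset.mem_univ _⟩
  set c := Finset.univ.inf' hne (fun i => |η (F.je i)|) with hc
  have hcpos : 0 < c := by
    rw [hc, Finset.lt_inf'_iff]
    intro i _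
    have := hconf i
    have h1 := (hconf.abs_eq i)
    rw [← h1] at this
    exact this
  have hcle : ∀ i, c ≤ |η (F.je i)| := fun i => Finset.inf'_le _ (Finset.mem_univ i)
  set η' : Fin n → ℝ := η - F.vec c with hη'
  have hval : ∀ i, |η' (F.je i)| = |η (F.je i)| - c := by
    intro i
    have h1 : η' (F.je i) = η (F.je i) - F.sgn i * c := by
      rw [hη']; simp [F.vec_je]
    have h2 : F.sgn i * η' (F.je i) = |η (F.je i)| - c := by
      rw [h1, mul_sub, ← mul_assoc, sgn_sq, one_mul, ← hconf.abs_eq i]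
    have h3 : 0 ≤ F.sgn i * η' (F.je i) := by rw [h2]; linarith [hcle i]
    calc |η' (F.je i)| = |F.sgn i * η' (F.je i)| := by rw [abs_mul, F.abs_sgn, one_mul]
      _ = F.sgn i * η' (F.je i) := abs_of_nonneg h3
      _ = |η (F.je i)| - c := h2
  have hout : ∀ j ∉ Finset.univ.image F.je, η' j = η j := by
    intro j hj
    rw [hη']
    have : F.vec c j = 0 := F.vec_of_notMem c (fun i hi =>
      hj (Finset.mem_image.mpr ⟨i, Finset.mem_univ i, hi⟩))
    simp [this]
  have hcard_im : (Finset.univ.image F.je).card = F.len := by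
    rw [Finset.card_image_of_injective _ F.je_inj, Finset.card_univ, Fintype.card_fin]
  refine ⟨c, η', hcpos, ?_, ?_, ?_, ?_⟩
  · rw [hη', Matrix.mulVec_sub, hcirc, F.mulVec_vec, sub_zero]
  · -- l1 η = l1 η' + len * c
    unfold l1
    rw [← Finset.sum_add_sum_compl (Finset.univ.image F.je) (fun j => |η j|),
        ← Finset.sum_add_sum_compl (Finset.univ.image F.je) (fun j => |η' j|)]
    have h1 : ∑ j ∈ Finset.univ.image F.je, |η j|
        = (∑ j ∈ Finset.univ.image F.je, |η' j|) + F.len * c := by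
      rw [Finset.sum_image (fun a _ b _ h => F.je_inj h),
          Finset.sum_image (fun a _ b _ h => F.je_inj h)]
      have : ∀ i : Fin F.len, |η (F.je i)| = |η' (F.je i)| + c := by
        intro i; rw [hval i]; ring
      rw [Finset.sum_congr rfl fun i _ => this i, Finset.sum_add_distrib,
        Finset.sum_const, Finset.card_univ, Fintype.card_fin, nsmul_eq_mul]
    have h2 : ∑ j ∈ (Finset.univ.image F.je)ᶜ, |η j|
        = ∑ j ∈ (Finset.univ.image F.je)ᶜ, |η' j| :=
      Finset.sum_congr rfl fun j hj => by rw [hout j (Finset.mem_compl.mp hj)]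
    rw [h1, h2]; ring
  · -- pointwise
    intro j
    by_cases hj : j ∈ Finset.univ.image F.je
    · obtain ⟨i, _, rfl⟩ := Finset.mem_image.mp hj
      rw [hval i]; linarith
    · rw [hout j hj]; linarith
  · -- support decreases
    obtain ⟨imin, _, hmin⟩ := Finset.exists_mem_eq_inf' hne (fun i => |η (F.je i)|)
    have hsub : suppF η' ⊆ suppF η := by
      intro j hj
      rw [suppF, Finset.mem_filter] at hj ⊢
      refine ⟨Finset.mem_univ j, ?_⟩
      by_cases hjim : j ∈ Finset.univ.image F.je
      · obtain ⟨i, _, rfl⟩ := Finset.mem_image.mp hjim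
        intro h0
        have := hcle i
        rw [h0, abs_zero] at this
        linarith
      · rw [← hout j hjim]; exact hj.2
    apply Finset.card_lt_card
    rw [Finset.ssubset_iff_of_subset hsub]
    refine ⟨F.je imin, ?_, ?_⟩
    · rw [suppF, Finset.mem_filter]
      refine ⟨Finset.mem_univ _, fun h0 => ?_⟩
      have := hcle imin
      rw [h0, abs_zero] at this
      linarith
    · rw [suppF, Finset.mem_filter]
      intro h
      apply h.2
      have : |η' (F.je imin)| = 0 := by rw [hval imin, ← hmin, hc]; ring
      exact abs_eq_zero.mp this

end Key
section Walk

variable {m n : ℕ}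

/-- There is positive flow (w.r.t. `η`) from `u` to `v` along some edge. -/
def stepR (E : Fin n → Fin m × Fin m) (η : Fin n → ℝ) (u v : Fin m) : Prop :=
  ∃ j, (E j = (u, v) ∧ 0 < η j) ∨ (E j = (v, u) ∧ η j < 0)

variable {E : Fin n → Fin m × Fin m} {η : Fin n → ℝ}

lemma stepR_ne (hsimple : IsSimpleDigraph E) {u v : Fin m} (h : stepR E η u v) : u ≠ v := by
  rcases h with ⟨j, ⟨hj, _⟩ | ⟨hj, _⟩⟩ <;> intro he <;> apply hsimple.1 j <;> rw [hj]
  · exact he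
  · exact he.symm

lemma not_stepR_both (hsimple : IsSimpleDigraph E) {u v : Fin m}
    (h1 : stepR E η u v) (h2 : stepR E η v u) : False := by
  have huv : u ≠ v := stepR_ne hsimple h1
  obtain ⟨j, hj⟩ := h1
  obtain ⟨k, hk⟩ := h2
  by_cases hjk : j = k
  · subst hjk
    rcases hj with ⟨e1, p1⟩ | ⟨e1, p1⟩ <;> rcases hk with ⟨e2, p2⟩ | ⟨e2, p2⟩ <;>
      rw [e1] at e2
    · exact huv (Prod.ext_iff.mp e2).1
    · linarith
    · linarith
    · exact huv (Prod.ext_iff.mp e2).1.symm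
  · have hs := hsimple.2 j k hjk
    rcases hj with ⟨e1, _⟩ | ⟨e1, _⟩ <;> rcases hk with ⟨e2, _⟩ | ⟨e2, _⟩ <;>
      rw [e1, e2] at hs <;> simp at hs

lemma stepR_succ (hsimple : IsSimpleDigraph E) (hcirc : (IncMatrix E).mulVec η = 0)
    {v : Fin m} (h : ∃ u, stepR E η u v) : ∃ w, stepR E η v w := by
  obtain ⟨u, j₀, hj₀⟩ := h
  have hsum : ∑ j, IncMatrix E v j * η j = 0 := by
    have := congrFun hcirc v
    simpa [Matrix.mulVec, dotProduct] using this
  have hpos : 0 < IncMatrix E v j₀ * η j₀ := by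
    rcases hj₀ with ⟨hj, hη⟩ | ⟨hj, hη⟩
    · have hne : u ≠ v := by
        intro he; apply hsimple.1 j₀; rw [hj]; exact he
      have hA : IncMatrix E v j₀ = 1 := by simp [IncMatrix, hj, hne]
      rw [hA]; linarith
    · have hA : IncMatrix E v j₀ = -1 := by simp [IncMatrix, hj]
      rw [hA]; linarith
  have hneg : ∃ j₁, IncMatrix E v j₁ * η j₁ < 0 := by
    by_contra hno
    push_neg at hno
    have hle := Finset.single_le_sum (f := fun j => IncMatrix E v j * η j)
      (fun j _ => hno j) (Finset.mem_univ j₀)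
    rw [hsum] at hle
    have hle' : IncMatrix E v j₀ * η j₀ ≤ 0 := hle
    linarith
  obtain ⟨j₁, h1⟩ := hneg
  by_cases hc1 : (E j₁).1 = v
  · have hA : IncMatrix E v j₁ = -1 := by simp [IncMatrix, hc1]
    rw [hA] at h1
    exact ⟨(E j₁).2, j₁, Or.inl ⟨Prod.ext_iff.mpr ⟨hc1, rfl⟩, by linarith⟩⟩
  · by_cases hc2 : (E j₁).2 = v
    · have hA : IncMatrix E v j₁ = 1 := by simp [IncMatrix, hc1, hc2]
      rw [hA, one_mul] at h1
      exact ⟨(E j₁).1, j₁, Or.inr ⟨Prod.ext_iff.mpr ⟨rfl, hc2⟩, h1⟩⟩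
    · have hA : IncMatrix E v j₁ = 0 := by simp [IncMatrix, hc1, hc2]
      rw [hA, zero_mul] at h1
      linarith

lemma flowcycle_of_steps (hsimple : IsSimpleDigraph E) {L : ℕ} (hL : 1 ≤ L)
    (vert : Fin L → Fin m) (inj : Function.Injective vert)
    (hstep : ∀ i, stepR E η (vert i) (vert (cyc i))) :
    ∃ F : FlowCycle m n E, ConformalFlow η F := by
  have hL3 : 3 ≤ L := by
    by_contra hcon
    push_neg at hcon
    interval_cases L
    · have := stepR_ne hsimple (hstep ⟨0, by omega⟩)
      exact this (congrArg vert (by decide))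
    · have e0 : cyc (0 : Fin 2) = 1 := by decide
      have e1 : cyc (1 : Fin 2) = 0 := by decide
      exact not_stepR_both hsimple
        (by have := hstep 0; rwa [e0] at this)
        (by have := hstep 1; rwa [e1] at this)
  refine ⟨⟨L, hL3, vert, inj, fun i => (hstep i).choose,
    fun i => if E ((hstep i).choose) = (vert i, vert (cyc i)) then 1 else -1, ?_⟩, ?_⟩
  · intro i
    rcases (hstep i).choose_spec with ⟨he, _⟩ | ⟨he, _⟩
    · exact Or.inl ⟨he, if_pos he⟩
    · refine Or.inr ⟨he, if_neg ?_⟩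
      rw [he]
      intro hcontra
      exact cyc_ne (by omega) i (inj (Prod.ext_iff.mp hcontra).1)
  · intro i
    dsimp only
    rcases (hstep i).choose_spec with ⟨he, hp⟩ | ⟨he, hp⟩
    · rw [if_pos he]; linarith
    · rw [if_neg (by
        rw [he]
        intro hcontra
        exact cyc_ne (show 2 ≤ L by omega) i (inj (Prod.ext_iff.mp hcontra).1))]
      linarith

lemma exists_conformalFlow (hsimple : IsSimpleDigraph E)
    (hcirc : (IncMatrix E).mulVec η = 0) (hne : η ≠ 0) :
    ∃ F : FlowCycle m n E, ConformalFlow η F := by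
  classical
  have hstart : ∃ u v, stepR E η u v := by
    have hex : ∃ j, η j ≠ 0 := by
      by_contra h; push_neg at h; exact hne (funext h)
    obtain ⟨j, hj⟩ := hex
    rcases lt_or_gt_of_ne hj with h | h
    · exact ⟨(E j).2, (E j).1, j, Or.inr ⟨rfl, h⟩⟩
    · exact ⟨(E j).1, (E j).2, j, Or.inl ⟨rfl, h⟩⟩
  obtain ⟨u₀, v₀, hstep₀⟩ := hstart
  have hsucc : ∀ v : Fin m, (∃ u, stepR E η u v) → ∃ w, stepR E η v w :=
    fun v h => stepR_succ hsimple hcirc h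
  set gnext : Fin m → Fin m := fun v => if h : ∃ w, stepR E η v w then h.choose else v with hgdef
  set f : ℕ → Fin m := fun k => gnext^[k] v₀ with hfdef
  have hfs : ∀ k, f (k+1) = gnext (f k) := fun k => Function.iterate_succ_apply' gnext k v₀
  have hgnext : ∀ v (h : ∃ w, stepR E η v w), stepR E η v (gnext v) := by
    intro v h
    have : gnext v = h.choose := by rw [hgdef]; exact dif_pos h
    rw [this]
    exact h.choose_spec
  have hwalk : ∀ k, (∃ u, stepR E η u (f k)) ∧ stepR E η (f k) (f (k+1)) := by
    intro k
    induction k with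
    | zero =>
      have hin : ∃ u, stepR E η u (f 0) := ⟨u₀, hstep₀⟩
      exact ⟨hin, by rw [hfs 0]; exact hgnext _ (hsucc _ hin)⟩
    | succ k ih =>
      have hin : ∃ u, stepR E η u (f (k+1)) := ⟨f k, ih.2⟩
      exact ⟨hin, by rw [hfs (k+1)]; exact hgnext _ (hsucc _ hin)⟩
  -- find a collision
  have hcol : ∃ a b : ℕ, a < b ∧ f a = f b := by
    have hnoinj : ¬Function.Injective (fun k : Fin (m+1) => f k.1) := by
      intro hinj
      have := Fintype.card_le_of_injective _ hinj
      rw [Fintype.card_fin, Fintype.card_fin] at this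
      omega
    rw [Function.not_injective_iff] at hnoinj
    obtain ⟨a, b, hfeq, hne'⟩ := hnoinj
    rcases lt_trichotomy a.1 b.1 with h | h | h
    · exact ⟨a.1, b.1, h, hfeq⟩
    · exact absurd (Fin.ext h) hne'
    · exact ⟨b.1, a.1, h, hfeq.symm⟩
  have hPex : ∃ k, ∃ a, a < k ∧ f a = f k := by
    obtain ⟨a, b, hab, he⟩ := hcol
    exact ⟨b, a, hab, he⟩
  set b₀ := Nat.find hPex with hb₀def
  obtain ⟨a₀, ha₀, haeq⟩ := Nat.find_spec hPex
  have hinjOn : ∀ x y, x < y → y < b₀ → f x ≠ f y := by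
    intro x y hxy hyb hfe
    exact Nat.find_min hPex hyb ⟨x, hxy, hfe⟩
  set L := b₀ - a₀ with hLdef
  have hL : 1 ≤ L := by omega
  set vert : Fin L → Fin m := fun i => f (a₀ + i.1) with hvdef
  have hinj : Function.Injective vert := by
    intro x y hxy
    apply Fin.ext
    by_contra hne'
    have hx2 := x.2
    have hy2 := y.2
    rcases Nat.lt_or_ge x.1 y.1 with h | h
    · exact hinjOn (a₀ + x.1) (a₀ + y.1) (by omega) (by omega) hxy
    · exact hinjOn (a₀ + y.1) (a₀ + x.1) (by omega) (by omega) hxy.symm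
  have hstepv : ∀ i : Fin L, stepR E η (vert i) (vert (cyc i)) := by
    intro i
    have hw := (hwalk (a₀ + i.1)).2
    have hv : vert (cyc i) = f (a₀ + i.1 + 1) := by
      show f (a₀ + (i.1 + 1) % L) = f (a₀ + i.1 + 1)
      rcases Nat.lt_or_ge (i.1 + 1) L with hlt | hge
      · rw [Nat.mod_eq_of_lt hlt, ← Nat.add_assoc]
      · have hiL : i.1 + 1 = L := by have := i.2; omega
        rw [hiL, Nat.mod_self]
        have hb : a₀ + i.1 + 1 = b₀ := by omega
        rw [hb]
        simpa using haeq
    rw [hv]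
    exact hw
  exact flowcycle_of_steps hsimple hL vert hinj hstepv

end Walk
section MainLemmas

variable {m n : ℕ} {E : Fin n → Fin m × Fin m}

lemma l1_nonneg (x : Fin n → ℝ) : 0 ≤ l1 x := Finset.sum_nonneg fun i _ => abs_nonneg _

lemma mem_suppF {x : Fin n → ℝ} {j : Fin n} : j ∈ suppF x ↔ x j ≠ 0 := by
  rw [suppF, Finset.mem_filter]
  simp

lemma key_bound (hsimple : IsSimpleDigraph E) {g : ℕ}
    (hg_min : ∀ C : SimpleCycleIn m n E, g ≤ C.len) :
    ∀ η : Fin n → ℝ, (IncMatrix E).mulVec η = 0 → ∀ j, (g:ℝ) * |η j| ≤ l1 η := by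
  suffices H : ∀ N (η : Fin n → ℝ), (suppF η).card ≤ N → (IncMatrix E).mulVec η = 0 →
      ∀ j, (g:ℝ) * |η j| ≤ l1 η by
    intro η hη j; exact H (suppF η).card η le_rfl hη j
  intro N
  induction N with
  | zero =>
    intro η hcard _ j
    have hz : ∀ i, η i = 0 := by
      intro i
      by_contra h
      have hmem : i ∈ suppF η := mem_suppF.mpr h
      have := Finset.card_pos.mpr ⟨i, hmem⟩
      omega
    rw [hz j]
    simp [l1, hz]
  | succ N ih =>
    intro η hcard hcirc j
    by_cases hz : η = 0
    · subst hz; simp [l1]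
    · obtain ⟨F, hconf⟩ := exists_conformalFlow hsimple hcirc hz
      obtain ⟨c, η', hc, hcirc', hl1, hle, hsupp⟩ := decomp F hconf hcirc
      have hg : (g:ℝ) ≤ F.len := by exact_mod_cast hg_min F.toSC
      have hih := ih η' (by omega) hcirc' j
      have hg0 : (0:ℝ) ≤ g := Nat.cast_nonneg g
      calc (g:ℝ) * |η j| ≤ g * (|η' j| + c) := mul_le_mul_of_nonneg_left (hle j) hg0
        _ = g * |η' j| + g * c := by ring
        _ ≤ l1 η' + F.len * c := by
            have h2 : (g:ℝ) * c ≤ F.len * c := mul_le_mul_of_nonneg_right hg hc.le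
            linarith
        _ = l1 η := hl1.symm

lemma l1S_le_l1 (S : Finset (Fin n)) (x : Fin n → ℝ) : l1S S x ≤ l1 x :=
  Finset.sum_le_sum_of_subset_of_nonneg (Finset.subset_univ S) fun i _ _ => abs_nonneg _

lemma sc_to_flow (C : SimpleCycleIn m n E) : ∃ F : FlowCycle m n E, F.len = C.len := by
  refine ⟨⟨C.len, C.hlen, C.vert, C.inj, fun i => (C.edges i).choose,
    fun i => if E ((C.edges i).choose) = (C.vert i, C.vert (cyc i)) then 1 else -1, ?_⟩, rfl⟩
  intro i
  rcases (C.edges i).choose_spec with he | he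
  · exact Or.inl ⟨he, if_pos he⟩
  · refine Or.inr ⟨he, if_neg ?_⟩
    rw [he]
    intro hcontra
    exact cyc_ne (show 2 ≤ C.len by have := C.hlen; omega) i (C.inj (Prod.ext_iff.mp hcontra).1)

end MainLemmas

/-- Let `A` be the incidence matrix of a simple directed graph with girth `g` (the graph
contains at least one simple cycle, and `g` is the length of the shortest one).  Then
`nsc(s, A) = min {1, s/g}` for every integer `s ≥ 1`; consequently every `s`-sparse vector
`xbar` is the unique solution of `min ‖x‖₁ s.t. A x = A xbar` iff `s < g/2`. -/
theorem stmt11 {m n : ℕ} (E : Fin n → Fin m × Fin m) (hsimple : IsSimpleDigraph E)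
    (g : ℕ) (hg_cyc : ∃ C : SimpleCycleIn m n E, C.len = g)
    (hg_min : ∀ C : SimpleCycleIn m n E, g ≤ C.len)
    (s : ℕ) (hs : 1 ≤ s) :
    nsc s (IncMatrix E) = min 1 ((s : ℝ) / (g : ℝ)) ∧
    ((∀ xbar : Fin n → ℝ, (suppF xbar).card ≤ s →
        ∀ x : Fin n → ℝ, (IncMatrix E).mulVec x = (IncMatrix E).mulVec xbar → x ≠ xbar →
          l1 xbar < l1 x)
      ↔ (s : ℝ) < (g : ℝ) / 2) := by
  classical
  obtain ⟨C0, hC0⟩ := hg_cyc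
  have hg3 : 3 ≤ g := hC0 ▸ C0.hlen
  have hgR : (0:ℝ) < g := by
    have : 0 < g := by omega
    exact_mod_cast this
  obtain ⟨F, hFlen⟩ := sc_to_flow C0
  have hFg : F.len = g := hFlen.trans hC0
  have hkey := key_bound hsimple hg_min
  have hentry : ∀ η : Fin n → ℝ, (IncMatrix E).mulVec η = 0 → ∀ j, |η j| ≤ l1 η / g := by
    intro η hη j
    rw [le_div_iff₀ hgR]
    have := hkey η hη j
    linarith
  set t := min s g with ht
  have htg : t ≤ g := min_le_right s g
  have hts : t ≤ s := min_le_left s g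
  have hima : (Finset.univ.image F.je).card = g := by
    rw [Finset.card_image_of_injective _ F.je_inj, Finset.card_univ, Fintype.card_fin, hFg]
  obtain ⟨T, hTsub, hTcard⟩ := Finset.exists_subset_card_eq (s := Finset.univ.image F.je) (n := t)
    (by rw [hima]; exact htg)
  constructor
  · -- nsc value
    set K : ℝ := min 1 ((s:ℝ)/g) with hK
    have hub : ∀ r ∈ {r : ℝ | ∃ S : Finset (Fin n), S.card ≤ s ∧
        ∃ η : Fin n → ℝ, (IncMatrix E).mulVec η = 0 ∧ l1 η ≤ 1 ∧ r = l1S S η}, r ≤ K := by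
      rintro r ⟨S, hScard, η, hηc, hη1, rfl⟩
      apply le_min
      · exact (l1S_le_l1 S η).trans hη1
      · have h1 : ∀ j, |η j| ≤ 1 / g := by
          intro j
          have h2 := hentry η hηc j
          have h3 : l1 η / g ≤ 1 / g := by gcongr
          exact h2.trans h3
        calc l1S S η ≤ ∑ _j ∈ S, (1/g : ℝ) := Finset.sum_le_sum fun j _ => h1 j
          _ = S.card * (1/g) := by rw [Finset.sum_const, nsmul_eq_mul]
          _ ≤ s * (1/g) := by
              apply mul_le_mul_of_nonneg_right _ (by positivity)
              exact_mod_cast hScard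
          _ = s / g := by ring
    have hKt : K = (t:ℝ) * (1/g) := by
      rw [hK, ht]
      rcases le_total s g with hsg | hsg
      · have h1 : min s g = s := min_eq_left hsg
        have h2 : min (1:ℝ) ((s:ℝ)/g) = (s:ℝ)/g :=
          min_eq_right (by rw [div_le_one hgR]; exact_mod_cast hsg)
        rw [h1, h2]; ring
      · have h1 : min s g = g := min_eq_right hsg
        have h2 : min (1:ℝ) ((s:ℝ)/g) = 1 :=
          min_eq_left ((one_le_div hgR).mpr (by exact_mod_cast hsg))
        rw [h1, h2]
        field_simp
    have hmem : K ∈ {r : ℝ | ∃ S : Finset (Fin n), S.card ≤ s ∧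
        ∃ η : Fin n → ℝ, (IncMatrix E).mulVec η = 0 ∧ l1 η ≤ 1 ∧ r = l1S S η} := by
      refine ⟨T, hTcard ▸ hts, F.vec (1/g), F.mulVec_vec _, ?_, ?_⟩
      · rw [F.l1_vec, hFg, abs_of_pos (by positivity : (0:ℝ) < 1/g)]
        rw [mul_one_div, div_self hgR.ne']
      · have hval : ∀ j ∈ T, |F.vec (1/g) j| = 1/g := by
          intro j hj
          obtain ⟨i, _, rfl⟩ := Finset.mem_image.mp (hTsub hj)
          rw [F.abs_vec_je, abs_of_pos (by positivity : (0:ℝ) < 1/g)]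
        rw [hKt]
        unfold l1S
        rw [Finset.sum_congr rfl hval, Finset.sum_const, nsmul_eq_mul, hTcard]
    exact IsGreatest.csSup_eq ⟨hmem, hub⟩
  · constructor
    · -- recovery → s < g/2, by contradiction
      intro hrec
      by_contra hnot
      push_neg at hnot
      have hg2s : g ≤ 2 * s := by
        have h1 : (g:ℝ) ≤ 2 * s := by linarith
        exact_mod_cast h1
      have h2t : g ≤ 2 * t := by omega
      set η₁ := F.vec 1 with hη₁
      set xbar : Fin n → ℝ := fun j => if j ∈ T then η₁ j else 0 with hxbar
      set x : Fin n → ℝ := fun j => if j ∈ T then 0 else -η₁ j with hx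
      have hxbarT : ∀ j ∈ T, xbar j = η₁ j := fun j hj => by
        simp only [hxbar]; rw [if_pos hj]
      have hxbarC : ∀ j ∉ T, xbar j = 0 := fun j hj => by
        simp only [hxbar]; rw [if_neg hj]
      have hxT : ∀ j ∈ T, x j = 0 := fun j hj => by
        simp only [hx]; rw [if_pos hj]
      have hxC : ∀ j ∉ T, x j = -η₁ j := fun j hj => by
        simp only [hx]; rw [if_neg hj]
      have hsub : x = xbar - η₁ := by
        funext j
        by_cases hj : j ∈ T <;> simp [hx, hxbar, hj]
      have hax : (IncMatrix E).mulVec x = (IncMatrix E).mulVec xbar := by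
        rw [hsub, Matrix.mulVec_sub, F.mulVec_vec, sub_zero]
      have i₀ : Fin F.len := ⟨0, by omega⟩
      have hj0 : |η₁ (F.je i₀)| = 1 := by rw [hη₁, F.abs_vec_je, abs_one]
      have hη₁ne : η₁ ≠ 0 := by
        intro h0
        rw [h0] at hj0
        simp at hj0
      have hnex : x ≠ xbar := by
        intro h
        rw [hsub] at h
        exact hη₁ne (by rwa [sub_eq_self] at h)
      have hsuppT : suppF xbar ⊆ T := by
        intro j hj
        rw [mem_suppF] at hj
        by_contra hjT
        exact hj (hxbarC j hjT)
      have hcards : (suppF xbar).card ≤ s :=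
        le_trans (le_trans (Finset.card_le_card hsuppT) hTcard.le) hts
      have hTval : ∀ j ∈ T, |η₁ j| = 1 := by
        intro j hj
        obtain ⟨i, _, rfl⟩ := Finset.mem_image.mp (hTsub hj)
        rw [hη₁, F.abs_vec_je, abs_one]
      have hl1xbar : l1 xbar = t := by
        rw [l1, ← Finset.sum_add_sum_compl T]
        have e1 : ∑ j ∈ T, |xbar j| = (t:ℝ) := by
          calc ∑ j ∈ T, |xbar j| = ∑ _j ∈ T, (1:ℝ) :=
                Finset.sum_congr rfl (fun j hj => by rw [hxbarT j hj]; exact hTval j hj)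
            _ = (t:ℝ) := by rw [Finset.sum_const, nsmul_eq_mul, hTcard, mul_one]
        have e2 : ∑ j ∈ Tᶜ, |xbar j| = 0 :=
          Finset.sum_eq_zero fun j hj => by rw [hxbarC j (Finset.mem_compl.mp hj), abs_zero]
        rw [e1, e2, add_zero]
      have hl1x : l1 x = (g:ℝ) - t := by
        rw [l1, ← Finset.sum_add_sum_compl T]
        have e1 : ∑ j ∈ T, |x j| = 0 :=
          Finset.sum_eq_zero fun j hj => by rw [hxT j hj, abs_zero]
        have e2 : ∑ j ∈ Tᶜ, |x j| = ∑ j ∈ Tᶜ, |η₁ j| :=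
          Finset.sum_congr rfl fun j hj => by
            rw [hxC j (Finset.mem_compl.mp hj), abs_neg]
        have e3 : ∑ j ∈ Tᶜ, |η₁ j| = (g:ℝ) - t := by
          have e4 : (∑ j ∈ T, |η₁ j|) + ∑ j ∈ Tᶜ, |η₁ j| = l1 η₁ :=
            Finset.sum_add_sum_compl T _
          have e5 : l1 η₁ = (g:ℝ) := by
            rw [hη₁, F.l1_vec, hFg, abs_one, mul_one]
          have e6 : ∑ j ∈ T, |η₁ j| = (t:ℝ) := by
            rw [Finset.sum_congr rfl hTval, Finset.sum_const, nsmul_eq_mul, hTcard, mul_one]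
          linarith
        rw [e1, e2, e3, zero_add]
      have hlt := hrec xbar hcards x hax hnex
      rw [hl1xbar, hl1x] at hlt
      have : (g:ℝ) ≤ 2 * t := by exact_mod_cast h2t
      linarith
    · -- s < g/2 → recovery
      intro hlt xbar hxbar x hax hnex
      have h2s : 2 * s < g := by
        have h1 : (2 * s : ℝ) < g := by push_cast; linarith
        exact_mod_cast h1
      set η : Fin n → ℝ := x - xbar with hηdef
      have hηc : (IncMatrix E).mulVec η = 0 := by
        rw [hηdef, Matrix.mulVec_sub, hax, sub_self]
      have hηne : η ≠ 0 := sub_ne_zero.mpr hnex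
      have hl1pos : 0 < l1 η := by
        obtain ⟨j₀, hj₀⟩ := Function.ne_iff.mp hηne
        have h1 : |η j₀| ≤ l1 η :=
          Finset.single_le_sum (f := fun j => |η j|) (fun j _ => abs_nonneg _) (Finset.mem_univ j₀)
        have h2 : 0 < |η j₀| := abs_pos.mpr hj₀
        linarith
      set S := suppF xbar with hS
      have hbound : ∑ j ∈ S, |η j| ≤ (s:ℝ) * (l1 η / g) := by
        calc ∑ j ∈ S, |η j| ≤ ∑ _j ∈ S, l1 η / g :=
              Finset.sum_le_sum fun j _ => hentry η hηc j
          _ = S.card * (l1 η / g) := by rw [Finset.sum_const, nsmul_eq_mul]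
          _ ≤ s * (l1 η / g) := by
              apply mul_le_mul_of_nonneg_right _ (by positivity)
              exact_mod_cast hxbar
      have hhalf : (s:ℝ) * (l1 η / g) < l1 η / 2 := by
        have hc : (s:ℝ) * 2 < g := by push_cast at h2s ⊢; linarith
        have hd : (0:ℝ) < l1 η / g := div_pos hl1pos hgR
        have he : (g:ℝ) * (l1 η / g) = l1 η := by field_simp
        nlinarith
      have hxeq : ∀ j, x j = xbar j + η j := by
        intro j
        rw [hηdef]
        simp
      have hx1 : l1 x = (∑ j ∈ S, |xbar j + η j|) + ∑ j ∈ Sᶜ, |xbar j + η j| := by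
        rw [l1, ← Finset.sum_add_sum_compl S]
        congr 1 <;> exact Finset.sum_congr rfl fun j _ => by rw [hxeq j]
      have hA1 : ∑ j ∈ S, (|xbar j| - |η j|) ≤ ∑ j ∈ S, |xbar j + η j| := by
        apply Finset.sum_le_sum
        intro j _
        have h := abs_add_le (xbar j + η j) (-η j)
        rw [add_neg_cancel_right, abs_neg] at h
        linarith
      have hA1' : ∑ j ∈ S, (|xbar j| - |η j|)
          = (∑ j ∈ S, |xbar j|) - ∑ j ∈ S, |η j| := Finset.sum_sub_distrib _ _
      have hA2 : ∑ j ∈ Sᶜ, |xbar j + η j| = ∑ j ∈ Sᶜ, |η j| := by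
        apply Finset.sum_congr rfl
        intro j hj
        have hj0 : xbar j = 0 := by
          have := Finset.mem_compl.mp hj
          rw [hS] at this
          by_contra hc
          exact this (mem_suppF.mpr hc)
        rw [hj0, zero_add]
      have hsplit_xbar : l1 xbar = ∑ j ∈ S, |xbar j| := by
        rw [l1, ← Finset.sum_add_sum_compl S]
        have e2 : ∑ j ∈ Sᶜ, |xbar j| = 0 := by
          apply Finset.sum_eq_zero
          intro j hj
          have := Finset.mem_compl.mp hj
          rw [hS] at this
          by_contra hc
          exact this (mem_suppF.mpr (fun h0 => hc (by rw [h0, abs_zero])))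
        rw [e2, add_zero]
      have hsplit_η : (∑ j ∈ S, |η j|) + ∑ j ∈ Sᶜ, |η j| = l1 η :=
        Finset.sum_add_sum_compl S _
      linarith
end

section
/- Let n be a prime number and let Ω, Γ ⊆ U_n := {0,...,n-1} be nonempty index sets with |Γ| = |Ω| + 1. Then every nonzero complex vector c in the nullspace of the submatrix F_{Ω,Γ} of the n×n DFT matrix has exactly |Γ| nonzero entries. -/
/-- `ξ = e^{-2πi/n}`, the primitive `n`-th root of unity used in the DFT. -/
noncomputable def dftXi (n : ℕ) : ℂ :=
  Complex.exp (-2 * (Real.pi : ℂ) * Complex.I / (n : ℂ))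

/-- The `n × n` DFT matrix, `[F_n]_{k,l} = (1/√n) ξ^{kl}`. -/
noncomputable def Fdft (n : ℕ) : Matrix (Fin n) (Fin n) ℂ :=
  Matrix.of fun k l => ((Real.sqrt n : ℝ) : ℂ)⁻¹ * dftXi n ^ ((k : ℕ) * (l : ℕ))

/-- The submatrix `F_{Ω,Γ}` of the DFT matrix, with rows indexed by `Ω` and columns by `Γ`
(both taken in increasing order). -/
noncomputable def FdftSub (n : ℕ) (Ω Γ : Finset (Fin n)) :
    Matrix (Fin Ω.card) (Fin Γ.card) ℂ :=
  Matrix.of fun a b => Fdft n (Ω.orderEmbOfFin rfl a) (Γ.orderEmbOfFin rfl b)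

section CheAux
open Polynomial Finset

noncomputable def cheTheta (f : ℤ[X]) : ℤ[X] := Polynomial.X * Polynomial.derivative f

lemma cheTheta_X_pow (N : ℕ) : cheTheta (X ^ N) = C (N : ℤ) * X ^ N := by
  cases N with
  | zero => simp [cheTheta]
  | succ n =>
    simp only [cheTheta, derivative_X_pow, Nat.add_sub_cancel]
    push_cast
    ring

lemma cheTheta_iter_sum {α : Type*} (s : Finset α) (a : α → ℤ) (N : α → ℕ) (m : ℕ) :
    cheTheta^[m] (∑ σ ∈ s, C (a σ) * X ^ N σ) =
      ∑ σ ∈ s, C (a σ * (N σ : ℤ) ^ m) * X ^ N σ := by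
  induction m with
  | zero => simp
  | succ m ih =>
    rw [Function.iterate_succ_apply', ih, cheTheta]
    rw [derivative_sum, Finset.mul_sum]
    congr 1; ext σ
    rw [derivative_C_mul]
    have := cheTheta_X_pow (N σ)
    simp only [cheTheta] at this
    rw [show X * (C (a σ * (N σ:ℤ) ^ m) * derivative (X ^ N σ))
        = C (a σ * (N σ:ℤ) ^ m) * (X * derivative (X ^ N σ)) by ring, this]
    rw [← mul_assoc, ← C_mul]
    ring_nf

lemma cheTheta_factor (m : ℕ) : ∀ (r : ℕ) (h : ℤ[X]), m ≤ r →
    ∃ u : ℤ[X], cheTheta^[m] ((X - 1) ^ r * h) = (X - 1) ^ (r - m) * u ∧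
      u.eval 1 = (r.descFactorial m : ℤ) * h.eval 1 := by
  induction m with
  | zero => intro r h _; exact ⟨h, by simp, by simp⟩
  | succ m ih =>
    intro r h hmr
    obtain ⟨r, rfl⟩ : ∃ r', r = r' + 1 := ⟨r - 1, by omega⟩
    have step : cheTheta ((X - 1) ^ (r + 1) * h) =
        (X - 1) ^ r * (C ((r:ℤ) + 1) * X * h + (X - 1) * (X * derivative h)) := by
      simp only [cheTheta, derivative_mul, derivative_pow, derivative_sub, derivative_X,
        derivative_one]
      push_cast
      ring
    rw [Function.iterate_succ_apply, step]
    obtain ⟨u, hu, hu1⟩ := ih r _ (by omega)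
    have he : r + 1 - (m + 1) = r - m := by omega
    refine ⟨u, by rw [hu, he], ?_⟩
    rw [hu1, Nat.succ_descFactorial_succ]
    push_cast
    simp only [eval_add, eval_mul, eval_C, eval_X, eval_sub, eval_one]
    ring

lemma cheTheta_dvd (K : ℕ) (f : ℤ[X]) (h0 : ∀ m < K, (cheTheta^[m] f).eval 1 = 0) :
    ∃ h : ℤ[X], f = (X - 1) ^ K * h := by
  induction K with
  | zero => exact ⟨f, by simp⟩
  | succ K ih =>
    obtain ⟨h, rfl⟩ := ih (fun m hm => h0 m (by omega))
    obtain ⟨u, hu, hu1⟩ := cheTheta_factor K K h le_rfl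
    have := h0 K (by omega)
    rw [hu] at this
    simp only [Nat.sub_self, pow_zero, one_mul] at this
    rw [this, Nat.descFactorial_self] at hu1
    have hroot : h.eval 1 = 0 := by
      rcases mul_eq_zero.mp hu1.symm with h1 | h1
      · exact absurd h1 (by exact_mod_cast K.factorial_ne_zero)
      · exact h1
    have : (X - C (1:ℤ)) ∣ h := dvd_iff_isRoot.mpr hroot
    obtain ⟨h', rfl⟩ := this
    exact ⟨h', by rw [map_one]; ring⟩

lemma che_gauss_min : ∀ (k : ℕ) (s : Finset ℕ), s.card = k →
    ((∑ j ∈ range k, j) ≤ ∑ a ∈ s, a ∧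
      ((∑ a ∈ s, a) = ∑ j ∈ range k, j → s = range k)) := by
  intro k
  induction k with
  | zero => intro s hs; simp [Finset.card_eq_zero.mp hs]
  | succ k ih =>
    intro s hs
    have hne : s.Nonempty := Finset.card_pos.mp (by omega)
    set m := s.max' hne with hm
    have hmem : m ∈ s := s.max'_mem hne
    have hsub : s ⊆ range (m + 1) := fun a ha =>
      Finset.mem_range.mpr (Nat.lt_succ_of_le (s.le_max' a ha))
    have hmk : k ≤ m := by
      have := Finset.card_le_card hsub
      rw [hs, Finset.card_range] at this; omega
    have hce : (s.erase m).card = k := by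
      rw [Finset.card_erase_of_mem hmem, hs]
      omega
    obtain ⟨ih1, ih2⟩ := ih (s.erase m) hce
    have hsum : ∑ a ∈ s.erase m, a + m = ∑ a ∈ s, a := Finset.sum_erase_add s _ hmem
    rw [Finset.sum_range_succ]
    constructor
    · omega
    · intro heq
      have hm' : m = k := by omega
      have herase : ∑ a ∈ s.erase m, a = ∑ j ∈ range k, j := by omega
      have := ih2 herase
      rw [Finset.range_add_one, ← this, ← hm', Finset.insert_erase hmem]

lemma che_inj_sum_ge {k : ℕ} (μ : Fin k → ℕ) (hinj : Function.Injective μ) :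
    ∑ j ∈ range k, j ≤ ∑ i, μ i := by
  have hcard : (Finset.univ.image μ).card = k := by
    rw [Finset.card_image_of_injective _ hinj, Finset.card_univ, Fintype.card_fin]
  have := (che_gauss_min k _ hcard).1
  rwa [Finset.sum_image (fun a _ b _ h => hinj h)] at this

lemma che_inj_sum_eq {k : ℕ} (μ : Fin k → ℕ) (hinj : Function.Injective μ)
    (hsum : ∑ i, μ i = ∑ j ∈ range k, j) :
    ∃ τ : Equiv.Perm (Fin k), ∀ i, μ i = (τ i : ℕ) := by
  have hcard : (Finset.univ.image μ).card = k := by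
    rw [Finset.card_image_of_injective _ hinj, Finset.card_univ, Fintype.card_fin]
  have himg := (che_gauss_min k _ hcard).2
    (by rwa [Finset.sum_image (fun a _ b _ h => hinj h)])
  have hlt : ∀ i, μ i < k := by
    intro i
    have : μ i ∈ Finset.univ.image μ := Finset.mem_image_of_mem μ (Finset.mem_univ i)
    rw [himg, Finset.mem_range] at this
    exact this
  let f : Fin k → Fin k := fun i => ⟨μ i, hlt i⟩
  have hf : Function.Injective f := fun a b h => hinj (congrArg Fin.val h)
  exact ⟨Equiv.ofBijective f (Finite.injective_iff_bijective.mp hf), fun i => rfl⟩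

def cheS (k : ℕ) (x y : Fin k → ℕ) (e : ℕ) : ℤ :=
  ∑ σ : Equiv.Perm (Fin k), (Equiv.Perm.sign σ : ℤ) * ((∑ i, x (σ i) * y i : ℕ) : ℤ) ^ e

lemma che_moment_expand (k : ℕ) (x y : Fin k → ℕ) (e : ℕ) :
    cheS k x y e = ∑ μ ∈ Finset.piAntidiag Finset.univ e,
      (Nat.multinomial Finset.univ μ : ℤ) * (∏ i, (y i : ℤ) ^ μ i) *
        Matrix.det (Matrix.of fun a b : Fin k => (x a : ℤ) ^ μ b) := by
  unfold cheS
  have expand : ∀ σ : Equiv.Perm (Fin k),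
      ((∑ i, x (σ i) * y i : ℕ) : ℤ) ^ e = ∑ μ ∈ Finset.piAntidiag Finset.univ e,
        (Nat.multinomial Finset.univ μ : ℤ) *
          ∏ i, ((x (σ i) : ℤ) * (y i : ℤ)) ^ μ i := by
    intro σ
    push_cast
    exact Finset.sum_pow_eq_sum_piAntidiag Finset.univ _ e
  simp_rw [expand, Finset.mul_sum]
  rw [Finset.sum_comm]
  refine Finset.sum_congr rfl fun μ _ => ?_
  rw [Matrix.det_apply', Finset.mul_sum]
  refine Finset.sum_congr rfl fun σ _ => ?_
  simp only [Matrix.of_apply]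
  simp_rw [mul_pow, Finset.prod_mul_distrib]
  push_cast
  ring

lemma che_det_col_zero {k : ℕ} (x : Fin k → ℕ) (μ : Fin k → ℕ)
    (h : ¬ Function.Injective μ) :
    Matrix.det (Matrix.of fun a b : Fin k => (x a : ℤ) ^ μ b) = 0 := by
  simp only [Function.Injective, not_forall] at h
  obtain ⟨b, b', hbb, hne⟩ := h
  exact Matrix.det_zero_of_column_eq hne (fun a => by simp [hbb])

lemma che_moment_lt (k : ℕ) (x y : Fin k → ℕ) (e : ℕ) (he : e < ∑ j ∈ range k, j) :
    cheS k x y e = 0 := by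
  rw [che_moment_expand]
  refine Finset.sum_eq_zero fun μ hμ => ?_
  rw [Finset.mem_piAntidiag] at hμ
  have : ¬ Function.Injective μ := fun hinj => by
    have h2 := che_inj_sum_ge μ hinj
    have hs : ∑ i, μ i = e := hμ.1
    omega
  rw [che_det_col_zero x μ this, mul_zero]

lemma che_multinomial_perm {k : ℕ} (τ : Equiv.Perm (Fin k)) :
    Nat.multinomial Finset.univ (fun i => (τ i : ℕ)) =
      Nat.multinomial Finset.univ (fun i : Fin k => (i : ℕ)) := by
  have h1 := Nat.multinomial_spec Finset.univ (fun i => ((τ i : ℕ)))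
  have h2 := Nat.multinomial_spec Finset.univ (fun i : Fin k => (i : ℕ))
  have hprod : ∏ i, Nat.factorial (τ i : ℕ) = ∏ i : Fin k, Nat.factorial (i : ℕ) :=
    Equiv.prod_comp τ (fun i => Nat.factorial (i : ℕ))
  have hsum : ∑ i, ((τ i : ℕ)) = ∑ i : Fin k, (i : ℕ) :=
    Equiv.sum_comp τ (fun i => (i : ℕ))
  rw [hprod, hsum] at h1
  have hpos : 0 < ∏ i : Fin k, Nat.factorial (i : ℕ) :=
    Finset.prod_pos fun i _ => Nat.factorial_pos _
  exact Nat.eq_of_mul_eq_mul_left hpos (h1.trans h2.symm)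

lemma che_sum_univ_fin (k : ℕ) : ∑ i : Fin k, (i : ℕ) = ∑ j ∈ range k, j :=
  Fin.sum_univ_eq_sum_range (fun j => j) k

lemma che_moment_K (k : ℕ) (x y : Fin k → ℕ) :
    cheS k x y (∑ j ∈ range k, j) =
      (Nat.multinomial Finset.univ (fun i : Fin k => (i : ℕ)) : ℤ) *
        ((Matrix.vandermonde fun i => (x i : ℤ)).det *
          (Matrix.vandermonde fun i => (y i : ℤ)).det) := by
  rw [che_moment_expand]
  set K := ∑ j ∈ range k, j with hK
  set F : (Fin k → ℕ) → ℤ := fun μ =>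
    (Nat.multinomial Finset.univ μ : ℤ) * (∏ i, (y i : ℤ) ^ μ i) *
      Matrix.det (Matrix.of fun a b : Fin k => (x a : ℤ) ^ μ b) with hF
  have hcoe : ∀ τ : Equiv.Perm (Fin k),
      (fun i => (τ i : ℕ)) ∈ Finset.piAntidiag (Finset.univ : Finset (Fin k)) K := by
    intro τ
    rw [Finset.mem_piAntidiag]
    exact ⟨by rw [Equiv.sum_comp τ (fun i => (i : ℕ))]; exact che_sum_univ_fin k,
      fun i _ => Finset.mem_univ i⟩
  have hinjmap : Function.Injective
      (fun (τ : Equiv.Perm (Fin k)) => (fun i => (τ i : ℕ))) := by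
    intro τ τ' h
    exact Equiv.ext fun i => Fin.val_injective (congrFun h i)
  have hsub : Finset.image (fun (τ : Equiv.Perm (Fin k)) => (fun i => (τ i : ℕ)))
      Finset.univ ⊆ Finset.piAntidiag Finset.univ K := by
    intro μ hμ
    obtain ⟨τ, _, rfl⟩ := Finset.mem_image.mp hμ
    exact hcoe τ
  have hzero : ∀ μ ∈ Finset.piAntidiag (Finset.univ : Finset (Fin k)) K,
      μ ∉ Finset.image (fun (τ : Equiv.Perm (Fin k)) => (fun i => (τ i : ℕ)))
        Finset.univ → F μ = 0 := by
    intro μ hμ hnot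
    by_cases hinj : Function.Injective μ
    · obtain ⟨τ, hτ⟩ := che_inj_sum_eq μ hinj (Finset.mem_piAntidiag.mp hμ).1
      exact absurd (Finset.mem_image.mpr
        ⟨τ, Finset.mem_univ τ, (funext fun i => (hτ i).symm)⟩) hnot
    · simp only [hF, che_det_col_zero x μ hinj, mul_zero]
  rw [← Finset.sum_subset hsub hzero,
    Finset.sum_image (fun τ _ τ' _ h => hinjmap h)]
  have hterm : ∀ τ : Equiv.Perm (Fin k), F (fun i => (τ i : ℕ)) =
      (Nat.multinomial Finset.univ (fun i : Fin k => (i : ℕ)) : ℤ) *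
        (Matrix.vandermonde fun i => (x i : ℤ)).det *
          ((Equiv.Perm.sign τ : ℤ) * ∏ i, (y i : ℤ) ^ (τ i : ℕ)) := by
    intro τ
    have hdet : Matrix.det (Matrix.of fun a b : Fin k => (x a : ℤ) ^ (τ b : ℕ)) =
        (Equiv.Perm.sign τ : ℤ) * (Matrix.vandermonde fun i => (x i : ℤ)).det := by
      have : (Matrix.of fun a b : Fin k => (x a : ℤ) ^ (τ b : ℕ)) =
          (Matrix.vandermonde fun i => (x i : ℤ)).submatrix id τ := by
        ext a b
        simp [Matrix.vandermonde]
      rw [this, Matrix.det_permute']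
      norm_cast
    simp only [hF, che_multinomial_perm τ, hdet]
    ring
  simp_rw [hterm]
  rw [← Finset.mul_sum]
  have : ∑ τ : Equiv.Perm (Fin k), (Equiv.Perm.sign τ : ℤ) * ∏ i, (y i : ℤ) ^ (τ i : ℕ) =
      (Matrix.vandermonde fun i => (y i : ℤ)).det := by
    rw [← Matrix.det_transpose, Matrix.det_apply']
    refine Finset.sum_congr rfl fun τ _ => ?_
    simp [Matrix.vandermonde]
  rw [this]
  ring

lemma che_p_not_dvd_vand (p : ℕ) (hp : p.Prime) {k : ℕ} (x : Fin k → ℕ)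
    (hx : Function.Injective x) (hxp : ∀ i, x i < p) :
    ¬ ((p : ℤ) ∣ (Matrix.vandermonde fun i => (x i : ℤ)).det) := by
  rw [Matrix.det_vandermonde]
  intro hdvd
  have hip : Prime (p : ℤ) := Nat.prime_iff_prime_int.mp hp
  obtain ⟨i, -, hdvd⟩ := hip.exists_mem_finset_dvd hdvd
  obtain ⟨j, hj, hdvd⟩ := hip.exists_mem_finset_dvd hdvd
  have hij : i ≠ j := by
    intro h; subst h; exact absurd hj (by simp)
  have hne : (x j : ℤ) - (x i : ℤ) ≠ 0 := by
    intro h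
    have : x i = x j := by omega
    exact hij (hx this)
  have h1 := Int.le_of_dvd (abs_pos.mpr hne) ((dvd_abs _ _).mpr hdvd)
  have h2 : |(x j : ℤ) - (x i : ℤ)| < p := by
    have := hxp i; have := hxp j
    rw [abs_lt]; omega
  omega

theorem che_det_ne_zero (p : ℕ) (hp : p.Prime) {k : ℕ} (x y : Fin k → ℕ)
    (hx : Function.Injective x) (hy : Function.Injective y)
    (hxp : ∀ i, x i < p) (hyp : ∀ i, y i < p)
    (ξ : ℂ) (hξ : IsPrimitiveRoot ξ p) :
    Matrix.det (Matrix.of fun a b : Fin k => ξ ^ (x a * y b)) ≠ 0 := by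
  intro hdet
  set K := ∑ j ∈ range k, j with hK
  set f : ℤ[X] := ∑ σ : Equiv.Perm (Fin k),
    C ((Equiv.Perm.sign σ : ℤ)) * X ^ (∑ i, x (σ i) * y i) with hf
  have haeval : (Polynomial.aeval ξ) f =
      Matrix.det (Matrix.of fun a b : Fin k => ξ ^ (x a * y b)) := by
    rw [Matrix.det_apply', hf, map_sum]
    refine Finset.sum_congr rfl fun σ _ => ?_
    rw [map_mul, map_pow, aeval_C, aeval_X]
    simp only [Matrix.of_apply]
    rw [Finset.prod_pow_eq_pow_sum]
    congr 1
  have hiter : ∀ m : ℕ, (cheTheta^[m] f).eval 1 = cheS k x y m := by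
    intro m
    rw [hf, cheTheta_iter_sum]
    simp [cheS, eval_finset_sum]
  obtain ⟨h, hfac⟩ := cheTheta_dvd K f
    (fun m hm => by rw [hiter]; exact che_moment_lt k x y m hm)
  obtain ⟨u, hu, hu1⟩ := cheTheta_factor K K h le_rfl
  have hSK : (K.factorial : ℤ) * h.eval 1 = cheS k x y K := by
    have h3 := hiter K
    rw [hfac, hu] at h3
    simp only [Nat.sub_self, pow_zero, one_mul] at h3
    rw [← h3, hu1, Nat.descFactorial_self]
  have hnd : ¬ ((p : ℤ) ∣ h.eval 1) := by
    intro hd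
    set Cst := Nat.multinomial Finset.univ (fun i : Fin k => (i : ℕ)) with hCst
    have hCne : (Cst : ℤ) ≠ 0 := by
      have hCpos := Nat.multinomial_pos (s := (Finset.univ : Finset (Fin k)))
        (f := fun i : Fin k => (i : ℕ))
      exact_mod_cast Nat.pos_iff_ne_zero.mp hCpos
    have hKfac : (∏ i : Fin k, Nat.factorial (i : ℕ)) * Cst = K.factorial := by
      have hspec := Nat.multinomial_spec Finset.univ (fun i : Fin k => (i : ℕ))
      rw [hspec, che_sum_univ_fin k]
    have heq : (Cst : ℤ) * (((∏ i : Fin k, Nat.factorial (i : ℕ) : ℕ) : ℤ) * h.eval 1) =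
        (Cst : ℤ) * ((Matrix.vandermonde fun i => (x i : ℤ)).det *
          (Matrix.vandermonde fun i => (y i : ℤ)).det) := by
      have h2 := hSK
      rw [che_moment_K] at h2
      rw [← h2, ← hKfac]
      push_cast
      ring
    have heq2 := mul_left_cancel₀ hCne heq
    have hpd : (p : ℤ) ∣ (Matrix.vandermonde fun i => (x i : ℤ)).det *
        (Matrix.vandermonde fun i => (y i : ℤ)).det := by
      rw [← heq2]
      exact Dvd.dvd.mul_left hd _
    rcases (Nat.prime_iff_prime_int.mp hp).dvd_mul.mp hpd with hc | hc
    · exact che_p_not_dvd_vand p hp x hx hxp hc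
    · exact che_p_not_dvd_vand p hp y hy hyp hc
  have hξh : (Polynomial.aeval ξ) h = 0 := by
    have h0 : (Polynomial.aeval ξ) f = 0 := by rw [haeval, hdet]
    rw [hfac, map_mul, map_pow, map_sub, aeval_X, map_one] at h0
    rcases mul_eq_zero.mp h0 with h1 | h1
    · exfalso
      have hne : ξ - 1 ≠ 0 := sub_ne_zero.mpr (hξ.ne_one hp.one_lt)
      exact hne (pow_eq_zero_iff'.mp h1).1
    · exact h1
  haveI : Fact p.Prime := ⟨hp⟩
  have hmin : minpoly ℚ ξ ∣ h.map (Int.castRingHom ℚ) :=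
    minpoly.dvd ℚ ξ (by
      rw [show (Int.castRingHom ℚ) = algebraMap ℤ ℚ from rfl, Polynomial.aeval_map_algebraMap]
      exact hξh)
  rw [← Polynomial.cyclotomic_eq_minpoly_rat hξ hp.pos,
    ← Polynomial.map_cyclotomic p (Int.castRingHom ℚ)] at hmin
  have hdvd : Polynomial.cyclotomic p ℤ ∣ h :=
    (Polynomial.map_dvd_map (Int.castRingHom ℚ) Int.cast_injective
      (Polynomial.cyclotomic.monic p ℤ)).mp hmin
  refine hnd ?_
  obtain ⟨g, hg⟩ := hdvd
  rw [hg, eval_mul, Polynomial.eval_one_cyclotomic_prime]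
  exact Dvd.intro _ rfl

lemma dftXi_primitive (n : ℕ) (hn : n ≠ 0) : IsPrimitiveRoot (dftXi n) n := by
  have h := Complex.isPrimitiveRoot_exp n hn
  have : dftXi n = (Complex.exp (2 * Real.pi * Complex.I / n))⁻¹ := by
    rw [dftXi, ← Complex.exp_neg]
    ring_nf
  rw [this]
  exact h.inv


end CheAux

/-- Let `n` be prime and `Ω, Γ ⊆ U_n` nonempty with `|Γ| = |Ω| + 1`.  Then every nonzero
complex vector in the nullspace of `F_{Ω,Γ}` has exactly `|Γ|` nonzero entries. -/
theorem stmt12 (n : ℕ) (hn : n.Prime) (Ω Γ : Finset (Fin n)) (hΩ : Ω.Nonempty)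
    (hΓ : Γ.card = Ω.card + 1)
    (c : Fin Γ.card → ℂ) (hc : (FdftSub n Ω Γ).mulVec c = 0) (hc0 : c ≠ 0) :
    {t : Fin Γ.card | c t ≠ 0}.ncard = Γ.card := by
  classical
  set ξ := dftXi n with hξdef
  have hξ : IsPrimitiveRoot ξ n := dftXi_primitive n hn.ne_zero
  -- row equations
  have hrow : ∀ a : Fin Ω.card,
      ∑ b : Fin Γ.card,
        ξ ^ (((Ω.orderEmbOfFin rfl a : Fin n) : ℕ) * ((Γ.orderEmbOfFin rfl b : Fin n) : ℕ))
          * c b = 0 := by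
    intro a
    have h0 := congrFun hc a
    rw [Matrix.mulVec, dotProduct] at h0
    simp only [FdftSub, Fdft, Matrix.of_apply, Pi.zero_apply] at h0
    have hsqrt : ((Real.sqrt n : ℝ) : ℂ)⁻¹ ≠ 0 := by
      have : (0:ℝ) < Real.sqrt n := Real.sqrt_pos.mpr (by exact_mod_cast hn.pos)
      simp only [ne_eq, inv_eq_zero, Complex.ofReal_eq_zero]
      exact ne_of_gt this
    rw [show (∑ b, ((Real.sqrt n : ℝ) : ℂ)⁻¹ * ξ ^ (((Ω.orderEmbOfFin rfl a : Fin n) : ℕ) *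
        ((Γ.orderEmbOfFin rfl b : Fin n) : ℕ)) * c b)
      = ((Real.sqrt n : ℝ) : ℂ)⁻¹ * ∑ b, ξ ^ (((Ω.orderEmbOfFin rfl a : Fin n) : ℕ) *
        ((Γ.orderEmbOfFin rfl b : Fin n) : ℕ)) * c b by
        rw [Finset.mul_sum]; exact Finset.sum_congr rfl fun b _ => by ring] at h0
    exact (mul_eq_zero.mp h0).resolve_left hsqrt
  -- the support
  set T : Finset (Fin Γ.card) := Finset.univ.filter (fun t => c t ≠ 0) with hT
  have hncard : {t : Fin Γ.card | c t ≠ 0}.ncard = T.card := by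
    rw [Set.ncard_eq_toFinset_card']
    congr 1
    simp [hT, Set.toFinset_setOf]
  rw [hncard]
  have hle : T.card ≤ Γ.card := le_trans (Finset.card_le_univ T) (by simp)
  by_contra hne
  have hlt : T.card < Γ.card := lt_of_le_of_ne hle hne
  have hsle : T.card ≤ Ω.card := by omega
  obtain ⟨Ω', hΩ'sub, hΩ'card⟩ := Finset.exists_subset_card_eq hsle
  set s := T.card with hs
  -- index maps
  set xe : Fin s → Fin n := fun a => Ω'.orderEmbOfFin hΩ'card a with hxe
  set te : Fin s → Fin Γ.card := fun b => T.orderEmbOfFin rfl b with hte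
  set ye : Fin s → Fin n := fun b => Γ.orderEmbOfFin rfl (te b) with hye
  set x : Fin s → ℕ := fun a => (xe a : ℕ) with hx
  set y : Fin s → ℕ := fun b => (ye b : ℕ) with hy
  have hxinj : Function.Injective x :=
    fun a b h => (Ω'.orderEmbOfFin hΩ'card).injective (Fin.val_injective h)
  have hyinj : Function.Injective y := by
    intro a b h
    exact (T.orderEmbOfFin rfl).injective
      ((Γ.orderEmbOfFin rfl).injective (Fin.val_injective h))
  have hdet := che_det_ne_zero n hn x y hxinj hyinj
    (fun i => (xe i).is_lt) (fun i => (ye i).is_lt) ξ hξ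
  -- c restricted
  set c' : Fin s → ℂ := fun b => c (te b) with hc'
  have hmv : (Matrix.of fun a b : Fin s => ξ ^ (x a * y b)).mulVec c' = 0 := by
    funext a
    -- find the row index in Ω
    have hmem : xe a ∈ Ω := hΩ'sub (Ω'.orderEmbOfFin_mem hΩ'card a)
    have : ∃ a' : Fin Ω.card, Ω.orderEmbOfFin rfl a' = xe a := by
      have := Finset.range_orderEmbOfFin Ω (rfl : Ω.card = Ω.card)
      have hm : (xe a : Fin n) ∈ Set.range (Ω.orderEmbOfFin rfl) := by
        rw [this]; exact_mod_cast hmem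
      exact hm
    obtain ⟨a', ha'⟩ := this
    have hr := hrow a'
    rw [ha'] at hr
    -- restrict the sum to T
    have hfil : ∑ b ∈ T, ξ ^ ((xe a : ℕ) * ((Γ.orderEmbOfFin rfl b : Fin n) : ℕ)) * c b
        = ∑ b : Fin Γ.card, ξ ^ ((xe a : ℕ) * ((Γ.orderEmbOfFin rfl b : Fin n) : ℕ)) * c b := by
      rw [hT]
      exact Finset.sum_filter_of_ne fun b _ hb => by
        intro hcb; exact hb (by rw [hcb, mul_zero])
    -- reindex T by te
    have hreindex : ∑ b ∈ T, ξ ^ ((xe a : ℕ) * ((Γ.orderEmbOfFin rfl b : Fin n) : ℕ)) * c b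
        = ∑ j : Fin s, ξ ^ (x a * y j) * c' j := by
      set F : Fin Γ.card → ℂ :=
        fun b => ξ ^ ((xe a : ℕ) * ((Γ.orderEmbOfFin rfl b : Fin n) : ℕ)) * c b with hFdef
      calc ∑ b ∈ T, F b = ∑ b : T, F b := (Finset.sum_coe_sort T F).symm
        _ = ∑ j : Fin s, F ((T.orderIsoOfFin rfl) j) :=
            ((T.orderIsoOfFin rfl).toEquiv.sum_comp (fun b : T => F (b : Fin Γ.card))).symm
        _ = ∑ j : Fin s, ξ ^ (x a * y j) * c' j := by
            refine Finset.sum_congr rfl fun j _ => ?_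
            have hco : ((T.orderIsoOfFin rfl j : Fin Γ.card)) = te j :=
              Finset.coe_orderIsoOfFin_apply T rfl j
            rw [hFdef, hco]
    rw [Matrix.mulVec, dotProduct, Pi.zero_apply]
    calc ∑ j : Fin s, (Matrix.of fun a b : Fin s => ξ ^ (x a * y b)) a j * c' j
        = ∑ j : Fin s, ξ ^ (x a * y j) * c' j := rfl
      _ = ∑ b ∈ T, ξ ^ ((xe a : ℕ) * ((Γ.orderEmbOfFin rfl b : Fin n) : ℕ)) * c b := hreindex.symm
      _ = 0 := by rw [hfil]; exact hr
  -- conclude c' = 0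
  have hinj : Function.Injective ((Matrix.of fun a b : Fin s => ξ ^ (x a * y b)).mulVec) :=
    Matrix.mulVec_injective_iff_isUnit.mpr
      ((Matrix.isUnit_iff_isUnit_det _).mpr (Ne.isUnit hdet))
  have hzero : c' = 0 := by
    apply hinj
    rw [hmv, Matrix.mulVec_zero]
  -- contradiction: T is nonempty
  have hTne : T.Nonempty := by
    obtain ⟨t, ht⟩ := Function.ne_iff.mp hc0
    exact ⟨t, Finset.mem_filter.mpr ⟨Finset.mem_univ t, ht⟩⟩
  obtain ⟨t, ht⟩ := hTne
  have : ∃ j : Fin s, te j = t := by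
    have := Finset.range_orderEmbOfFin T (rfl : T.card = T.card)
    have hm : t ∈ Set.range (T.orderEmbOfFin rfl) := by rw [this]; exact_mod_cast ht
    exact hm
  obtain ⟨j, hj⟩ := this
  have hcj : c (te j) = 0 := congrFun hzero j
  rw [hj] at hcj
  exact (Finset.mem_filter.mp ht).2 hcj
end
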